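/- arXiv:2308.08346 — 2 statements merged into one kernel-verified Lean document; each statement's English description precedes it below -/
import Mathlib

section
/- Let F₀ : ℝ → [0,1] be a distribution function that is continuous and strictly increasing on an interval [a,b], and let (Fₙ) be a sequence of distribution functions converging pointwise to F₀ on [a,b]. If F₀(a) < p ≤ q < F₀(b), then the generalized inverses converge uniformly: sup_{r ∈ [p,q]} |Fₙ⁻¹(r) − F₀⁻¹(r)| → 0 as n → ∞, where G⁻¹(r) := inf{x : r ≤ G(x)}. -/
open Filter Set

/-- The generalized inverse (quantile function) of a distribution function. -/
noncomputable def genInv (G : ℝ → ℝ) (r : ℝ) : ℝ := sInf {x : ℝ | r ≤ G x}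

/-- A distribution function: monotone, right-continuous, with values in `[0,1]` and
limits `0` at `-∞` and `1` at `+∞`. -/
structure IsDistributionFunction (F : ℝ → ℝ) : Prop where
  mono : Monotone F
  mem_Icc : ∀ x, F x ∈ Icc (0 : ℝ) 1
  right_cont : ∀ x, ContinuousWithinAt F (Ici x) x
  tendsto_bot : Tendsto F atBot (nhds 0)
  tendsto_top : Tendsto F atTop (nhds 1)

lemma le_genInv {G : ℝ → ℝ} (hG : Monotone G) {x r : ℝ}
    (hne : {y : ℝ | r ≤ G y}.Nonempty) (h : G x < r) : x ≤ genInv G r :=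
  le_csInf hne fun y hy => le_of_not_gt fun hlt => absurd (le_trans hy (hG hlt.le)) h.not_ge

lemma genInv_le {G : ℝ → ℝ} {x r : ℝ}
    (hbdd : BddBelow {y : ℝ | r ≤ G y}) (h : r ≤ G x) : genInv G r ≤ x :=
  csInf_le hbdd h

lemma distrib_nonempty {G : ℝ → ℝ} (hG : IsDistributionFunction G) {r : ℝ} (hr : r < 1) :
    {y : ℝ | r ≤ G y}.Nonempty := by
  obtain ⟨y, hy⟩ := (hG.tendsto_top.eventually (eventually_gt_nhds hr)).exists
  exact ⟨y, hy.le⟩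

lemma distrib_bddBelow {G : ℝ → ℝ} (hG : IsDistributionFunction G) {r : ℝ} (hr : 0 < r) :
    BddBelow {y : ℝ | r ≤ G y} := by
  obtain ⟨z, hz⟩ := (hG.tendsto_bot.eventually (eventually_lt_nhds hr)).exists
  exact ⟨z, fun y hy => le_of_not_gt fun hlt => absurd (hy.trans (hG.mono hlt.le)) hz.not_ge⟩

lemma core_bound
    (F₀ : ℝ → ℝ) (F : ℕ → ℝ → ℝ) (a b p q : ℝ)
    (hF₀ : IsDistributionFunction F₀)
    (hF : ∀ n, IsDistributionFunction (F n))
    (hstrict : StrictMonoOn F₀ (Icc a b))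
    (hconv : ∀ w ∈ Icc a b, Tendsto (fun n => F n w) atTop (nhds (F₀ w)))
    (hap : F₀ a < p) (hpq : p ≤ q) (hqb : q < F₀ b)
    {ε : ℝ} (hε : 0 < ε) :
    ∀ᶠ n in atTop, ∀ r ∈ Icc p q, |genInv (F n) r - genInv F₀ r| ≤ ε := by
  classical
  have hab : a < b := by
    by_contra hba
    exact absurd (hF₀.mono (le_of_not_gt hba)) (by linarith)
  -- choose grid size
  obtain ⟨N₀, hN₀⟩ := exists_nat_ge (2 * (b - a) / ε)
  set M : ℕ := max N₀ 1 with hMdef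
  have hM1 : 1 ≤ M := le_max_right _ _
  have hMpos : (0:ℝ) < (M:ℝ) := by exact_mod_cast hM1
  have hMR : 2 * (b - a) / ε ≤ (M:ℝ) := hN₀.trans (by exact_mod_cast le_max_left N₀ 1)
  set h : ℝ := (b - a) / M with hhdef
  have hhpos : 0 < h := div_pos (by linarith) hMpos
  have h2h : 2 * h ≤ ε := by
    rw [div_le_iff₀ hε] at hMR
    rw [hhdef, mul_div_assoc', div_le_iff₀ hMpos]
    linarith
  set x : ℕ → ℝ := fun i => a + i * h with hxdef
  have hxM : x M = b := by
    simp only [hxdef, hhdef]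
    field_simp
    ring
  have hx_mono : ∀ i j : ℕ, i ≤ j → x i ≤ x j := by
    intro i j hij
    have : (i:ℝ) ≤ j := by exact_mod_cast hij
    simp only [hxdef]
    nlinarith
  have hx_strict : ∀ i j : ℕ, i < j → x i < x j := by
    intro i j hij
    have : (i:ℝ) < j := by exact_mod_cast hij
    simp only [hxdef]
    nlinarith
  have hx_mem : ∀ i : ℕ, i ≤ M → x i ∈ Icc a b := by
    intro i hi
    have h1 : (i:ℝ) ≤ M := by exact_mod_cast hi
    constructor
    · simp only [hxdef]; nlinarith
    · calc x i ≤ x M := hx_mono i M hi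
        _ = b := hxM
  set s : ℕ → ℝ := fun i => F₀ (x i) with hsdef
  have hs0 : s 0 = F₀ a := by simp [hsdef, hxdef]
  have hs_strict : ∀ i j : ℕ, i < j → j ≤ M → s i < s j := fun i j hij hj =>
    hstrict (hx_mem i (hij.le.trans hj)) (hx_mem j hj) (hx_strict i j hij)
  -- minimal gap
  have hrange_ne : (Finset.range M).Nonempty := ⟨0, Finset.mem_range.2 hM1⟩
  set δ : ℝ := (Finset.range M).inf' hrange_ne (fun i => s (i+1) - s i) with hδdef
  have hδpos : 0 < δ := by
    rw [hδdef, Finset.lt_inf'_iff]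
    intro i hi
    have := hs_strict i (i+1) (Nat.lt_succ_self i) (Finset.mem_range.1 hi)
    linarith
  have hδle : ∀ i : ℕ, i < M → δ ≤ s (i+1) - s i := fun i hi =>
    Finset.inf'_le _ (Finset.mem_range.2 hi)
  -- eventual conditions
  have hev1 : ∀ᶠ n in atTop, ∀ i ∈ Finset.range (M+1), |F n (x i) - s i| < δ := by
    rw [eventually_all_finset]
    intro i hi
    exact (hconv (x i) (hx_mem i (Nat.lt_succ_iff.1 (Finset.mem_range.1 hi)))).eventually
      (eventually_abs_sub_lt _ hδpos)
  have hev2 : ∀ᶠ n in atTop, F n a < p :=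
    (hconv a ⟨le_rfl, hab.le⟩).eventually (eventually_lt_nhds hap)
  have hev3 : ∀ᶠ n in atTop, q < F n b :=
    (hconv b ⟨hab.le, le_rfl⟩).eventually (eventually_gt_nhds hqb)
  filter_upwards [hev1, hev2, hev3] with n h1 h2 h3
  intro r hr
  have hr0 : 0 < r := lt_of_lt_of_le (lt_of_le_of_lt (hF₀.mem_Icc a).1 hap) hr.1
  have hr1 : r < 1 := lt_of_lt_of_le (lt_of_le_of_lt hr.2 hqb) (hF₀.mem_Icc b).2
  have hne0 : {y : ℝ | r ≤ F₀ y}.Nonempty := distrib_nonempty hF₀ hr1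
  have hbdd0 : BddBelow {y : ℝ | r ≤ F₀ y} := distrib_bddBelow hF₀ hr0
  have hnen : {y : ℝ | r ≤ F n y}.Nonempty := distrib_nonempty (hF n) hr1
  have hbddn : BddBelow {y : ℝ | r ≤ F n y} := distrib_bddBelow (hF n) hr0
  set I : ℕ := Nat.findGreatest (fun i => s i < r) M with hIdef
  have hI0 : s 0 < r := by rw [hs0]; exact lt_of_lt_of_le hap hr.1
  have hIle : I ≤ M := Nat.findGreatest_le M
  have hIspec : s I < r := by
    have := Nat.findGreatest_spec (P := fun i => s i < r) (Nat.zero_le M) hI0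
    simpa [← hIdef] using this
  have hIltM : I < M := by
    rcases lt_or_eq_of_le hIle with h' | h'
    · exact h'
    · exfalso
      rw [h'] at hIspec
      have : s M = F₀ b := by simp only [hsdef]; rw [hxM]
      rw [this] at hIspec
      linarith [hr.2]
  have hrleI1 : r ≤ s (I + 1) := by
    by_contra hlt
    push_neg at hlt
    exact Nat.findGreatest_is_greatest (P := fun i => s i < r)
      (by rw [← hIdef]; omega) (Nat.succ_le_of_lt hIltM) hlt
  -- bounds on genInv F₀ r
  have b1 : genInv F₀ r ≤ x (I + 1) := genInv_le hbdd0 hrleI1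
  have b2 : x I ≤ genInv F₀ r := le_genInv hF₀.mono hne0 hIspec
  -- lower bound on genInv (F n) r
  have b3 : x (I - 1) ≤ genInv (F n) r := by
    apply le_genInv (hF n).mono hnen
    rcases Nat.eq_zero_or_pos I with hI | hI
    · have hx0 : x (I - 1) = a := by rw [hI]; simp [hxdef]
      rw [hx0]
      exact lt_of_lt_of_le h2 hr.1
    · have hi1 : I - 1 < M := lt_of_le_of_lt (Nat.sub_le I 1) hIltM
      have habs := h1 (I - 1) (Finset.mem_range.2 (by omega))
      have hgap := hδle (I - 1) hi1
      have hsucc : I - 1 + 1 = I := Nat.succ_pred_eq_of_pos hI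
      rw [hsucc] at hgap
      have : F n (x (I - 1)) < s (I - 1) + δ := by
        have := abs_lt.1 habs
        linarith [this.2]
      linarith
  -- upper bound on genInv (F n) r
  have b4 : genInv (F n) r ≤ x (min (I + 2) M) := by
    apply genInv_le hbddn
    rcases le_or_gt (I + 2) M with hc | hc
    · rw [min_eq_left hc]
      have habs := h1 (I + 2) (Finset.mem_range.2 (by omega))
      have hgap := hδle (I + 1) (by omega)
      have : s (I + 2) - δ < F n (x (I + 2)) := by
        have := abs_lt.1 habs
        linarith [this.1]
      have : s (I + 1) ≤ F n (x (I + 2)) := by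
        have h2' : I + 1 + 1 = I + 2 := rfl
        rw [h2'] at hgap
        linarith
      linarith
    · have hIM : I + 1 = M := by omega
      rw [min_eq_right (by omega : M ≤ I + 2), hxM]
      exact le_of_lt (lt_of_le_of_lt hr.2 h3)
  -- combine
  have hxgap : ∀ i j : ℕ, j ≤ i + 2 → x j ≤ x i + 2 * h := by
    intro i j hij
    have : (j:ℝ) ≤ (i:ℝ) + 2 := by exact_mod_cast hij
    simp only [hxdef]
    nlinarith
  rw [abs_le]
  constructor
  · -- -ε ≤ genInv (F n) r - genInv F₀ r
    have := hxgap (I - 1) (I + 1) (by omega)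
    have hb := b1.trans this
    linarith [b3]
  · have := hxgap I (min (I + 2) M) (min_le_left _ _)
    have hb := b4.trans this
    linarith [b2]

/-- If distribution functions `Fₙ` converge pointwise on `[a,b]` to a
distribution function `F₀` that is continuous and strictly increasing on `[a,b]`, and
`F₀ a < p ≤ q < F₀ b`, then the generalized inverses converge uniformly on `[p,q]`. -/
theorem genInv_tendstoUniformly_of_pointwise
    (F₀ : ℝ → ℝ) (F : ℕ → ℝ → ℝ) (a b p q : ℝ)
    (hF₀ : IsDistributionFunction F₀)
    (hF : ∀ n, IsDistributionFunction (F n))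
    (hcont : ContinuousOn F₀ (Icc a b))
    (hstrict : StrictMonoOn F₀ (Icc a b))
    (hconv : ∀ w ∈ Icc a b, Tendsto (fun n => F n w) atTop (nhds (F₀ w)))
    (hap : F₀ a < p) (hpq : p ≤ q) (hqb : q < F₀ b) :
    Tendsto (fun n => ⨆ r : Icc p q, |genInv (F n) r - genInv F₀ r|) atTop (nhds 0) := by
  rw [Metric.tendsto_atTop]
  intro ε hε
  have hε2 : 0 < ε / 2 := by linarith
  obtain ⟨N, hN⟩ := eventually_atTop.1
    (core_bound F₀ F a b p q hF₀ hF hstrict hconv hap hpq hqb hε2)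
  refine ⟨N, fun n hn => ?_⟩
  haveI : Nonempty (Icc p q) := ⟨⟨p, le_rfl, hpq⟩⟩
  have bound : ∀ r : Icc p q, |genInv (F n) r - genInv F₀ r| ≤ ε / 2 :=
    fun r => hN n hn r r.2
  have hbdd : BddAbove (range fun r : Icc p q => |genInv (F n) r - genInv F₀ r|) := by
    refine ⟨ε / 2, ?_⟩
    rintro _ ⟨r, rfl⟩
    exact bound r
  have Tle : (⨆ r : Icc p q, |genInv (F n) r - genInv F₀ r|) ≤ ε / 2 := ciSup_le bound
  have T0 : 0 ≤ ⨆ r : Icc p q, |genInv (F n) r - genInv F₀ r| :=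
    le_trans (abs_nonneg _) (le_ciSup hbdd ⟨p, le_rfl, hpq⟩)
  rw [Real.dist_eq, sub_zero, abs_of_nonneg T0]
  linarith
end

section
/- (Multivariate Pólya theorem) Let W₁,…,W_L be real random variables whose marginal distribution functions F_ℓ are continuous, with joint distribution function F : ℝ^L → [0,1]. Let (Fₙ : ℝ^L → [0,1]) be a sequence of (joint) distribution functions with Fₙ(w) → F(w) for every w ∈ ℝ^L. Then sup_{w ∈ ℝ^L} |Fₙ(w) − F(w)| → 0 as n → ∞. -/
open Filter Set MeasureTheory


lemma polya_cover (x : ℝ) : ∀ (M : ℕ), 0 < M → ∀ (p : ℕ → ℝ), p 0 ≤ x → x ≤ p M →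
    ∃ k < M, p k ≤ x ∧ x ≤ p (k+1) := by
  intro M
  induction M with
  | zero => omega
  | succ m ih =>
    intro _ p h0 h1
    rcases Nat.eq_zero_or_pos m with hm | hm
    · subst hm; exact ⟨0, by omega, h0, h1⟩
    · by_cases hx : x ≤ p m
      · obtain ⟨k, hk, h⟩ := ih hm p h0 hx
        exact ⟨k, by omega, h⟩
      · exact ⟨m, by omega, le_of_not_ge hx, h1⟩

lemma polya_key (L : ℕ) (F : (Fin L → ℝ) → ℝ) (Fn : ℕ → (Fin L → ℝ) → ℝ)
    (G : Fin L → ℝ → ℝ)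
    (hF0 : ∀ w, 0 ≤ F w)
    (hFn0 : ∀ n w, 0 ≤ Fn n w)
    (hFmono : ∀ v w : Fin L → ℝ, (∀ ℓ, v ℓ ≤ w ℓ) → F v ≤ F w)
    (hFnmono : ∀ n, ∀ v w : Fin L → ℝ, (∀ ℓ, v ℓ ≤ w ℓ) → Fn n v ≤ Fn n w)
    (hFG : ∀ w ℓ, F w ≤ G ℓ (w ℓ))
    (hGmono : ∀ ℓ, Monotone (G ℓ))
    (hGcont : ∀ ℓ, Continuous (G ℓ))
    (hGbot : ∀ ℓ, Tendsto (fun k : ℕ => G ℓ (-(k : ℝ))) atTop (nhds 0))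
    (hGtop : ∀ ℓ, Tendsto (fun k : ℕ => G ℓ (k : ℝ)) atTop (nhds 1))
    (hconv : ∀ w, Tendsto (fun n => Fn n w) atTop (nhds (F w)))
    (hincr : ∀ v w : Fin L → ℝ, (∀ ℓ, v ℓ ≤ w ℓ) →
      F w ≤ F v + ∑ ℓ, (G ℓ (w ℓ) - G ℓ (v ℓ)))
    (hclipF : ∀ (w : Fin L → ℝ) (b : ℝ),
      F w ≤ F (fun ℓ => min (w ℓ) b) + ∑ ℓ, (1 - G ℓ b))
    (hclipFn : ∀ n (w : Fin L → ℝ) (b : ℝ),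
      Fn n w ≤ Fn n (fun ℓ => min (w ℓ) b) + ∑ _ℓ : Fin L, (1 - Fn n (fun _ => b)))
    (hcompl : ∀ b : ℝ, 1 ≤ F (fun _ => b) + ∑ ℓ, (1 - G ℓ b))
    (ε : ℝ) (hε : 0 < ε) :
    ∀ᶠ n in atTop, ∀ w, |Fn n w - F w| ≤ ε := by
  classical
  set ε' : ℝ := ε / ((L : ℝ) + 2) ^ 2 with hε'def
  have hε' : 0 < ε' := div_pos hε (by positivity)
  have hsumconst : ∀ r : ℝ, ∑ _ℓ : Fin L, r = (L : ℝ) * r := by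
    intro r
    simp [Finset.sum_const, nsmul_eq_mul]
  -- tails
  have htail : ∀ᶠ k : ℕ in atTop, ∀ ℓ, G ℓ (-(k : ℝ)) ≤ ε' ∧ 1 - ε' ≤ G ℓ (k : ℝ) := by
    rw [eventually_all]
    intro ℓ
    filter_upwards [(hGbot ℓ).eventually_lt_const hε',
      (hGtop ℓ).eventually_const_lt (by linarith : 1 - ε' < 1)] with k h1 h2
    exact ⟨h1.le, h2.le⟩
  obtain ⟨k₀, hk₀⟩ := htail.exists
  set a : ℝ := -(k₀ : ℝ) with hadef
  set b : ℝ := (k₀ : ℝ) with hbdef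
  have hab : a ≤ b := neg_le_self (Nat.cast_nonneg _)
  have hGa : ∀ ℓ, G ℓ a ≤ ε' := fun ℓ => (hk₀ ℓ).1
  have hGb : ∀ ℓ, 1 - ε' ≤ G ℓ b := fun ℓ => (hk₀ ℓ).2
  -- uniform continuity
  have hUC : ∀ ℓ, ∃ δ > 0, ∀ x ∈ Icc a b, ∀ y ∈ Icc a b,
      dist x y < δ → dist (G ℓ x) (G ℓ y) < ε' := fun ℓ =>
    Metric.uniformContinuousOn_iff.1
      (isCompact_Icc.uniformContinuousOn_of_continuous (hGcont ℓ).continuousOn) ε' hε'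
  choose δ hδpos hδ using hUC
  -- grid
  set M : ℕ := (Finset.univ.sup fun ℓ => ⌈(b - a) / δ ℓ⌉₊ + 1) + 1 with hMdef
  have hM : 0 < M := Nat.succ_pos _
  have hMR : (0 : ℝ) < M := by exact_mod_cast hM
  set h : ℝ := (b - a) / M with hhdef
  have hh0 : 0 ≤ h := div_nonneg (by linarith) (Nat.cast_nonneg _)
  set p : ℕ → ℝ := fun k => a + k * h with hpdef
  have hp0 : p 0 = a := by simp [hpdef]
  have hpM : p M = b := by
    simp only [hpdef, hhdef]
    field_simp
    ring
  have hpmem : ∀ k ≤ M, p k ∈ Icc a b := by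
    intro k hk
    constructor
    · have : 0 ≤ (k : ℝ) * h := mul_nonneg (Nat.cast_nonneg _) hh0
      simp only [hpdef]; linarith
    · have h1 : (k : ℝ) * h ≤ (M : ℝ) * h := by
        have : (k : ℝ) ≤ M := by exact_mod_cast hk
        exact mul_le_mul_of_nonneg_right this hh0
      have h2 : p k ≤ p M := by simp only [hpdef]; linarith
      rw [hpM] at h2; exact h2
  have hpmono : ∀ k, p k ≤ p (k + 1) := by
    intro k
    simp only [hpdef]
    have : (k : ℝ) * h ≤ ((k : ℕ) + 1 : ℕ) * h := by
      push_cast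
      nlinarith
    push_cast at this ⊢
    linarith
  have hstep : ∀ ℓ, ∀ k < M, G ℓ (p (k + 1)) - G ℓ (p k) ≤ ε' := by
    intro ℓ k hk
    have hhδ : h < δ ℓ := by
      have hMℓ : (⌈(b - a) / δ ℓ⌉₊ + 1 : ℕ) ≤ M := by
        have h0 : ⌈(b - a) / δ ℓ⌉₊ + 1 ≤ Finset.univ.sup fun ℓ => ⌈(b - a) / δ ℓ⌉₊ + 1 :=
          Finset.le_sup (f := fun ℓ => ⌈(b - a) / δ ℓ⌉₊ + 1) (Finset.mem_univ ℓ)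
        omega
      have h1 : (b - a) / δ ℓ ≤ (⌈(b - a) / δ ℓ⌉₊ : ℝ) := Nat.le_ceil _
      have h2 : ((⌈(b - a) / δ ℓ⌉₊ : ℝ) + 1) ≤ (M : ℝ) := by exact_mod_cast hMℓ
      have h3 : b - a ≤ (⌈(b - a) / δ ℓ⌉₊ : ℝ) * δ ℓ := (div_le_iff₀ (hδpos ℓ)).1 h1
      rw [hhdef, div_lt_iff₀ hMR]
      nlinarith [hδpos ℓ]
    have hdist : dist (p (k + 1)) (p k) < δ ℓ := by
      have : p (k + 1) - p k = h := by
        simp only [hpdef]; push_cast; ring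
      rw [Real.dist_eq, this, abs_of_nonneg hh0]
      exact hhδ
    have := hδ ℓ _ (hpmem (k + 1) hk) _ (hpmem k hk.le) hdist
    rw [Real.dist_eq] at this
    calc G ℓ (p (k + 1)) - G ℓ (p k) ≤ |G ℓ (p (k + 1)) - G ℓ (p k)| := le_abs_self _
      _ ≤ ε' := this.le
  -- grid vectors
  set S : Set ℝ := p '' Set.Iic M with hSdef
  set GV : Set (Fin L → ℝ) := Set.pi Set.univ (fun _ => S) with hGVdef
  have hGVfin : GV.Finite := Set.Finite.pi fun _ => (Set.finite_Iic M).image p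
  have hmemGV : ∀ v : Fin L → ℝ, (∀ ℓ, ∃ k ≤ M, v ℓ = p k) → v ∈ GV := by
    intro v hv
    rw [hGVdef, Set.mem_univ_pi]
    intro ℓ
    obtain ⟨k, hk, hvk⟩ := hv ℓ
    exact ⟨k, Set.mem_Iic.2 hk, hvk.symm⟩
  have hev : ∀ᶠ n in atTop, ∀ v ∈ GV, |Fn n v - F v| ≤ ε' := by
    rw [Set.Finite.eventually_all hGVfin]
    intro v _
    filter_upwards [Metric.tendsto_nhds.1 (hconv v) ε' hε'] with n hn
    rw [Real.dist_eq] at hn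
    exact hn.le
  filter_upwards [hev] with n hn w
  -- the estimate
  set c : Fin L → ℝ := fun ℓ => min (w ℓ) b with hcdef
  have hcw : ∀ ℓ, c ℓ ≤ w ℓ := fun ℓ => min_le_left _ _
  have hcb : ∀ ℓ, c ℓ ≤ b := fun ℓ => min_le_right _ _
  have hbGV : (fun _ : Fin L => b) ∈ GV := hmemGV _ fun ℓ => ⟨M, le_refl _, hpM.symm⟩
  have hFnb : F (fun _ => b) - ε' ≤ Fn n (fun _ => b) := by
    have := hn _ hbGV
    rw [abs_le] at this
    linarith [this.1]
  have hFb : 1 - (L : ℝ) * ε' ≤ F (fun _ => b) := by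
    have h1 := hcompl b
    have h2 : ∑ ℓ, (1 - G ℓ b) ≤ ∑ _ℓ : Fin L, ε' :=
      Finset.sum_le_sum fun ℓ _ => by linarith [hGb ℓ]
    rw [hsumconst] at h2
    linarith
  have hcostF : F w ≤ F c + (L : ℝ) * ε' := by
    have h1 := hclipF w b
    have h2 : ∑ ℓ, (1 - G ℓ b) ≤ ∑ _ℓ : Fin L, ε' :=
      Finset.sum_le_sum fun ℓ _ => by linarith [hGb ℓ]
    rw [hsumconst] at h2
    calc F w ≤ F c + ∑ ℓ, (1 - G ℓ b) := h1
      _ ≤ F c + (L : ℝ) * ε' := by linarith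
  have hcostFn : Fn n w ≤ Fn n c + (L : ℝ) * (((L : ℝ) + 1) * ε') := by
    have h1 := hclipFn n w b
    have hterm : 1 - Fn n (fun _ => b) ≤ ((L : ℝ) + 1) * ε' := by
      have hr : ((L : ℝ) + 1) * ε' = (L : ℝ) * ε' + ε' := by ring
      linarith
    have h2 : ∑ _ℓ : Fin L, (1 - Fn n (fun _ => b)) ≤ ∑ _ℓ : Fin L, (((L : ℝ) + 1) * ε') :=
      Finset.sum_le_sum fun ℓ _ => hterm
    rw [hsumconst, hsumconst] at h2
    rw [hsumconst] at h1
    linarith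
  -- middle bound
  have hmid : |Fn n c - F c| ≤ ((L : ℝ) + 2) * ε' := by
    by_cases hcase : ∀ ℓ, a ≤ c ℓ
    · -- grid sandwich
      have hcov : ∀ ℓ, ∃ k < M, p k ≤ c ℓ ∧ c ℓ ≤ p (k + 1) := fun ℓ =>
        polya_cover (c ℓ) M hM p (by rw [hp0]; exact hcase ℓ) (by rw [hpM]; exact hcb ℓ)
      choose k hkM hkl hku using hcov
      set l : Fin L → ℝ := fun ℓ => p (k ℓ) with hldef
      set u : Fin L → ℝ := fun ℓ => p (k ℓ + 1) with hudef
      have hlu : ∀ ℓ, l ℓ ≤ u ℓ := fun ℓ => hpmono _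
      have hlGV : l ∈ GV := hmemGV _ fun ℓ => ⟨k ℓ, (hkM ℓ).le, rfl⟩
      have huGV : u ∈ GV := hmemGV _ fun ℓ => ⟨k ℓ + 1, hkM ℓ, rfl⟩
      have hFul : F u ≤ F l + (L : ℝ) * ε' := by
        have h1 := hincr l u hlu
        have h2 : ∑ ℓ, (G ℓ (u ℓ) - G ℓ (l ℓ)) ≤ ∑ _ℓ : Fin L, ε' :=
          Finset.sum_le_sum fun ℓ _ => hstep ℓ (k ℓ) (hkM ℓ)
        rw [hsumconst] at h2
        linarith
      have hFnl := hn _ hlGV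
      have hFnu := hn _ huGV
      rw [abs_le] at hFnl hFnu
      have hFcl : F l ≤ F c := hFmono _ _ hkl
      have hFcu : F c ≤ F u := hFmono _ _ hku
      have hFncl : Fn n l ≤ Fn n c := hFnmono n _ _ hkl
      have hFncu : Fn n c ≤ Fn n u := hFnmono n _ _ hku
      have hexp : ((L : ℝ) + 2) * ε' = (L : ℝ) * ε' + ε' + ε' := by ring
      rw [abs_le]
      constructor
      · linarith [hFnl.1, hFnl.2, hFnu.1, hFnu.2, hε'.le]
      · linarith [hFnl.1, hFnl.2, hFnu.1, hFnu.2, hε'.le]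
    · push_neg at hcase
      obtain ⟨ℓ₀, hℓ₀⟩ := hcase
      have hFc : F c ≤ ε' := le_trans (hFG c ℓ₀) (le_trans (hGmono ℓ₀ hℓ₀.le) (hGa ℓ₀))
      set v : Fin L → ℝ := fun j => if j = ℓ₀ then a else b with hvdef
      have hvGV : v ∈ GV := hmemGV _ fun j => by
        by_cases hj : j = ℓ₀
        · exact ⟨0, Nat.zero_le _, by simp [hvdef, hj, hp0]⟩
        · exact ⟨M, le_refl _, by simp [hvdef, hj, hpM]⟩
      have hcv : ∀ j, c j ≤ v j := by
        intro j
        by_cases hj : j = ℓ₀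
        · subst hj; simp only [hvdef, if_pos rfl]; exact hℓ₀.le
        · simp only [hvdef, if_neg hj]; exact hcb j
      have hFv : F v ≤ ε' := by
        have h1 := hFG v ℓ₀
        have h2 : v ℓ₀ = a := by simp [hvdef]
        rw [h2] at h1
        exact le_trans h1 (hGa ℓ₀)
      have hFnv := hn _ hvGV
      rw [abs_le] at hFnv
      have hFncv : Fn n c ≤ Fn n v := hFnmono n _ _ hcv
      have hexp : ((L : ℝ) + 2) * ε' = (L : ℝ) * ε' + ε' + ε' := by ring
      have hLε : 0 ≤ (L : ℝ) * ε' := by positivity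
      rw [abs_le]
      constructor
      · linarith [hFn0 n c, hF0 c, hFnv.1, hFnv.2, hε'.le]
      · linarith [hFn0 n c, hF0 c, hFnv.1, hFnv.2, hε'.le]
  -- combine
  have hFcw : F c ≤ F w := hFmono _ _ hcw
  have hFncw : Fn n c ≤ Fn n w := hFnmono n _ _ hcw
  rw [abs_le] at hmid ⊢
  have heq : (((L : ℝ) + 2) ^ 2) * ε' = ε := by
    rw [hε'def]
    field_simp
  have hr1 : (L : ℝ) * (((L : ℝ) + 1) * ε') = (L : ℝ) * (L : ℝ) * ε' + (L : ℝ) * ε' := by ring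
  have hr2 : (((L : ℝ) + 2) ^ 2) * ε' = (L : ℝ) * (L : ℝ) * ε' + 4 * ((L : ℝ) * ε') + 4 * ε' := by
    ring
  have hr3 : ((L : ℝ) + 2) * ε' = (L : ℝ) * ε' + 2 * ε' := by ring
  have hLε : 0 ≤ (L : ℝ) * ε' := by positivity
  constructor
  · linarith [hmid.1, hmid.2, hε'.le]
  · linarith [hmid.1, hmid.2, hε'.le]

lemma polya_union_bound {α ι : Type*} [Fintype ι] [MeasurableSpace α] (ν : Measure α)
    [IsFiniteMeasure ν] (A B : Set α) (C : ι → Set α) (h : A ⊆ B ∪ ⋃ ℓ, C ℓ) :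
    (ν A).toReal ≤ (ν B).toReal + ∑ ℓ, (ν (C ℓ)).toReal := by
  have h1 : ν A ≤ ν B + ∑ ℓ, ν (C ℓ) :=
    le_trans (measure_mono h) (le_trans (measure_union_le _ _)
      (add_le_add_right (measure_iUnion_fintype_le _ _) _))
  have h2 : (ν A).toReal ≤ (ν B + ∑ ℓ, ν (C ℓ)).toReal := by
    refine ENNReal.toReal_mono ?_ h1
    refine ENNReal.add_ne_top.2 ⟨measure_ne_top _ _, ?_⟩
    exact (ENNReal.sum_lt_top.2 fun ℓ _ => measure_lt_top _ _).ne
  refine h2.trans_eq ?_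
  rw [ENNReal.toReal_add (measure_ne_top _ _)
    (ENNReal.sum_lt_top.2 fun ℓ _ => measure_lt_top _ _).ne, ENNReal.toReal_sum]
  intro ℓ _; exact measure_ne_top _ _

lemma polya_compl {α : Type*} [MeasurableSpace α] (ν : Measure α) [IsProbabilityMeasure ν]
    {S : Set α} (hS : MeasurableSet S) : (ν Sᶜ).toReal = 1 - (ν S).toReal := by
  rw [measure_compl hS (measure_ne_top _ _), measure_univ,
    ENNReal.toReal_sub_of_le prob_le_one ENNReal.one_ne_top]
  simp

lemma polya_le_one {α : Type*} [MeasurableSpace α] (ν : Measure α) [IsProbabilityMeasure ν]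
    (S : Set α) : (ν S).toReal ≤ 1 :=
  ENNReal.toReal_le_of_le_ofReal one_pos.le (by simpa using prob_le_one)

private theorem multivariate_polya_aux
    (L : ℕ) {Ω : Type*} [MeasurableSpace Ω] (ℙ : Measure Ω) [IsProbabilityMeasure ℙ]
    (W : Fin L → Ω → ℝ) (hW : ∀ ℓ, Measurable (W ℓ))
    (μ : ℕ → Measure (Fin L → ℝ)) (hμ : ∀ n, IsProbabilityMeasure (μ n))
    (hmarg_cont : ∀ ℓ : Fin L, Continuous fun t : ℝ => (ℙ {ω | W ℓ ω ≤ t}).toReal)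
    (hconv : ∀ w : Fin L → ℝ,
      Tendsto (fun n => ((μ n) {x | ∀ ℓ, x ℓ ≤ w ℓ}).toReal) atTop
        (nhds ((ℙ {ω | ∀ ℓ, W ℓ ω ≤ w ℓ}).toReal))) :
    Tendsto
      (fun n => ⨆ w : Fin L → ℝ,
        |((μ n) {x | ∀ ℓ, x ℓ ≤ w ℓ}).toReal - (ℙ {ω | ∀ ℓ, W ℓ ω ≤ w ℓ}).toReal|)
      atTop (nhds 0) := by
  classical
  haveI := hμ
  have hWm : ∀ (ℓ : Fin L) (t : ℝ), MeasurableSet {ω | W ℓ ω ≤ t} := fun ℓ t =>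
    (hW ℓ) measurableSet_Iic
  have hXm : ∀ (ℓ : Fin L) (t : ℝ), MeasurableSet {x : Fin L → ℝ | x ℓ ≤ t} := fun ℓ t =>
    (measurable_pi_apply ℓ) measurableSet_Iic
  have key : ∀ ε > 0, ∀ᶠ n in atTop, ∀ w : Fin L → ℝ,
      |((μ n) {x | ∀ ℓ, x ℓ ≤ w ℓ}).toReal - (ℙ {ω | ∀ ℓ, W ℓ ω ≤ w ℓ}).toReal| ≤ ε := by
    intro ε hε
    refine polya_key L (fun w => (ℙ {ω | ∀ ℓ, W ℓ ω ≤ w ℓ}).toReal)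
      (fun n w => ((μ n) {x | ∀ ℓ, x ℓ ≤ w ℓ}).toReal)
      (fun ℓ t => (ℙ {ω | W ℓ ω ≤ t}).toReal)
      (fun w => ENNReal.toReal_nonneg)
      (fun n w => ENNReal.toReal_nonneg)
      ?_ ?_ ?_ ?_ hmarg_cont ?_ ?_ hconv ?_ ?_ ?_ ?_ ε hε
    · -- F monotone
      intro v w hvw
      exact ENNReal.toReal_mono (measure_ne_top _ _)
        (measure_mono fun ω hω ℓ => le_trans (hω ℓ) (hvw ℓ))
    · -- Fn monotone
      intro n v w hvw
      exact ENNReal.toReal_mono (measure_ne_top _ _)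
        (measure_mono fun x hx ℓ => le_trans (hx ℓ) (hvw ℓ))
    · -- F ≤ marginal
      intro w ℓ
      exact ENNReal.toReal_mono (measure_ne_top _ _) (measure_mono fun ω hω => hω ℓ)
    · -- G monotone
      intro ℓ s t hst
      exact ENNReal.toReal_mono (measure_ne_top _ _)
        (measure_mono fun ω hω => le_trans hω hst)
    · -- G tends to 0 at -∞
      intro ℓ
      have hanti : Antitone fun k : ℕ => {ω | W ℓ ω ≤ -(k : ℝ)} := by
        intro i j hij ω hω
        have hij' : (i : ℝ) ≤ (j : ℝ) := Nat.cast_le.2 hij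
        exact le_trans hω (neg_le_neg hij')
      have h0 : (⋂ k : ℕ, {ω | W ℓ ω ≤ -(k : ℝ)}) = ∅ := by
        ext ω
        simp only [Set.mem_iInter, Set.mem_setOf_eq, Set.mem_empty_iff_false, iff_false,
          not_forall]
        obtain ⟨k, hk⟩ := exists_nat_gt (-(W ℓ ω))
        exact ⟨k, by push_neg; linarith⟩
      have h1 := tendsto_measure_iInter_atTop (μ := ℙ)
        (s := fun k : ℕ => {ω | W ℓ ω ≤ -(k : ℝ)})
        (fun k => (hWm ℓ (-(k : ℝ))).nullMeasurableSet) hanti ⟨0, measure_ne_top _ _⟩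
      rw [h0, measure_empty] at h1
      have h2 := (ENNReal.tendsto_toReal (a := 0) (by simp)).comp h1
      simpa [Function.comp_def] using h2
    · -- G tends to 1 at +∞
      intro ℓ
      have hmono : Monotone fun k : ℕ => {ω | W ℓ ω ≤ (k : ℝ)} := by
        intro i j hij ω hω
        have hij' : (i : ℝ) ≤ (j : ℝ) := Nat.cast_le.2 hij
        exact le_trans hω hij'
      have h0 : (⋃ k : ℕ, {ω | W ℓ ω ≤ (k : ℝ)}) = Set.univ := by
        ext ω
        simp only [Set.mem_iUnion, Set.mem_setOf_eq, Set.mem_univ, iff_true]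
        exact exists_nat_ge (W ℓ ω)
      have h1 := tendsto_measure_iUnion_atTop (μ := ℙ)
        (s := fun k : ℕ => {ω | W ℓ ω ≤ (k : ℝ)}) hmono
      rw [h0, measure_univ] at h1
      have h2 := (ENNReal.tendsto_toReal (a := 1) (by simp)).comp h1
      simpa [Function.comp_def] using h2
    · -- increment bound
      intro v w hvw
      have hsub : {ω | ∀ ℓ, W ℓ ω ≤ w ℓ} ⊆ {ω | ∀ ℓ, W ℓ ω ≤ v ℓ} ∪
          ⋃ ℓ, ({ω | W ℓ ω ≤ w ℓ} \ {ω | W ℓ ω ≤ v ℓ}) := by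
        intro ω hω
        by_cases hcase : ∀ ℓ, W ℓ ω ≤ v ℓ
        · exact Or.inl hcase
        · push_neg at hcase
          obtain ⟨ℓ, hℓ⟩ := hcase
          exact Or.inr (Set.mem_iUnion.2 ⟨ℓ, hω ℓ, not_le.2 hℓ⟩)
      refine (polya_union_bound ℙ _ _ _ hsub).trans (le_of_eq ?_)
      congr 1
      refine Finset.sum_congr rfl fun ℓ _ => ?_
      have hss : {ω | W ℓ ω ≤ v ℓ} ⊆ {ω | W ℓ ω ≤ w ℓ} := fun ω hω =>
        le_trans hω (hvw ℓ)
      rw [measure_diff hss (hWm ℓ (v ℓ)).nullMeasurableSet (measure_ne_top _ _),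
        ENNReal.toReal_sub_of_le (measure_mono hss) (measure_ne_top _ _)]
    · -- clip F
      intro w b
      have hsub : {ω | ∀ ℓ, W ℓ ω ≤ w ℓ} ⊆ {ω | ∀ ℓ, W ℓ ω ≤ min (w ℓ) b} ∪
          ⋃ ℓ, {ω | W ℓ ω ≤ b}ᶜ := by
        intro ω hω
        by_cases hcase : ∀ ℓ, W ℓ ω ≤ min (w ℓ) b
        · exact Or.inl hcase
        · push_neg at hcase
          obtain ⟨ℓ, hℓ⟩ := hcase
          exact Or.inr (Set.mem_iUnion.2 ⟨ℓ, fun hb =>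
            absurd hℓ (not_lt.2 (le_min (hω ℓ) hb))⟩)
      refine (polya_union_bound ℙ _ _ _ hsub).trans (le_of_eq ?_)
      congr 1
      exact Finset.sum_congr rfl fun ℓ _ => polya_compl ℙ (hWm ℓ b)
    · -- clip Fn
      intro n w b
      have hsub : {x : Fin L → ℝ | ∀ ℓ, x ℓ ≤ w ℓ} ⊆
          {x : Fin L → ℝ | ∀ ℓ, x ℓ ≤ min (w ℓ) b} ∪ ⋃ ℓ, {x : Fin L → ℝ | x ℓ ≤ b}ᶜ := by
        intro x hx
        by_cases hcase : ∀ ℓ, x ℓ ≤ min (w ℓ) b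
        · exact Or.inl hcase
        · push_neg at hcase
          obtain ⟨ℓ, hℓ⟩ := hcase
          exact Or.inr (Set.mem_iUnion.2 ⟨ℓ, fun hb =>
            absurd hℓ (not_lt.2 (le_min (hx ℓ) hb))⟩)
      refine (polya_union_bound (μ n) _ _ _ hsub).trans ?_
      refine add_le_add_right (Finset.sum_le_sum fun ℓ _ => ?_) _
      rw [polya_compl (μ n) (hXm ℓ b)]
      have : ((μ n) {x : Fin L → ℝ | ∀ ℓ', x ℓ' ≤ b}).toReal ≤
          ((μ n) {x : Fin L → ℝ | x ℓ ≤ b}).toReal :=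
        ENNReal.toReal_mono (measure_ne_top _ _) (measure_mono fun x hx => hx ℓ)
      linarith
    · -- complement bound
      intro b
      have hsub : (Set.univ : Set Ω) ⊆ {ω | ∀ ℓ, W ℓ ω ≤ b} ∪ ⋃ ℓ, {ω | W ℓ ω ≤ b}ᶜ := by
        intro ω _
        by_cases hcase : ∀ ℓ, W ℓ ω ≤ b
        · exact Or.inl hcase
        · push_neg at hcase
          obtain ⟨ℓ, hℓ⟩ := hcase
          exact Or.inr (Set.mem_iUnion.2 ⟨ℓ, not_le.2 hℓ⟩)
      have h1 := polya_union_bound ℙ _ _ _ hsub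
      rw [measure_univ, ENNReal.toReal_one] at h1
      refine h1.trans (le_of_eq ?_)
      congr 1
      exact Finset.sum_congr rfl fun ℓ _ => polya_compl ℙ (hWm ℓ b)
  -- conclude
  have hbdd : ∀ n : ℕ, BddAbove (Set.range fun w : Fin L → ℝ =>
      |((μ n) {x | ∀ ℓ, x ℓ ≤ w ℓ}).toReal - (ℙ {ω | ∀ ℓ, W ℓ ω ≤ w ℓ}).toReal|) := by
    intro n
    refine ⟨2, ?_⟩
    rintro x ⟨w, rfl⟩
    have h1 := polya_le_one (μ n) {x | ∀ ℓ, x ℓ ≤ w ℓ}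
    have h2 := polya_le_one ℙ {ω | ∀ ℓ, W ℓ ω ≤ w ℓ}
    have h3 : (0:ℝ) ≤ ((μ n) {x | ∀ ℓ, x ℓ ≤ w ℓ}).toReal := ENNReal.toReal_nonneg
    have h4 : (0:ℝ) ≤ (ℙ {ω | ∀ ℓ, W ℓ ω ≤ w ℓ}).toReal := ENNReal.toReal_nonneg
    rw [abs_le]
    constructor <;> linarith
  refine tendsto_order.2 ⟨fun b hb => Eventually.of_forall fun n => lt_of_lt_of_le hb ?_,
    fun b hb => ?_⟩
  · exact le_trans (abs_nonneg _) (le_ciSup (hbdd n) fun _ : Fin L => (0 : ℝ))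
  · filter_upwards [key (b / 2) (half_pos hb)] with n hn
    exact lt_of_le_of_lt (ciSup_le fun w => hn w) (half_lt_self hb)

/-- multivariate Pólya theorem: if the joint distribution functions of a
sequence of `L`-dimensional probability measures converge pointwise to the joint
distribution function of the law of a random vector `W` whose marginal distribution
functions are all continuous, then the convergence is uniform over `ℝ^L`. -/
theorem multivariate_polya
    (L : ℕ) {Ω : Type*} [MeasurableSpace Ω] (ℙ : Measure Ω) [IsProbabilityMeasure ℙ]
    (W : Fin L → Ω → ℝ) (hW : ∀ ℓ, Measurable (W ℓ))
    (μ : ℕ → Measure (Fin L → ℝ)) (hμ : ∀ n, IsProbabilityMeasure (μ n))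
    (hmarg_cont : ∀ ℓ : Fin L, Continuous fun t : ℝ => (ℙ {ω | W ℓ ω ≤ t}).toReal)
    (hconv : ∀ w : Fin L → ℝ,
      Tendsto (fun n => ((μ n) {x | ∀ ℓ, x ℓ ≤ w ℓ}).toReal) atTop
        (nhds ((ℙ {ω | ∀ ℓ, W ℓ ω ≤ w ℓ}).toReal))) :
    Tendsto
      (fun n => ⨆ w : Fin L → ℝ,
        |((μ n) {x | ∀ ℓ, x ℓ ≤ w ℓ}).toReal - (ℙ {ω | ∀ ℓ, W ℓ ω ≤ w ℓ}).toReal|)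
      atTop (nhds 0) := by
  exact multivariate_polya_aux L ℙ W hW μ hμ hmarg_cont hconv
end
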